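/- Let A, B be symmetric n×n real matrices such that for every x ≠ 0 either xᵀAx ≠ 0 or xᵀBx ≠ 0. Then the joint range R(A,B) = {(xᵀAx, xᵀBx) : x ∈ R^n} is either all of R² or a closed convex cone containing no line through the origin other than possibly trivially (an angular sector of angle less than π). -/

import Mathlib

open scoped Matrix

lemma dines_bil_symm {n : ℕ} (M : Matrix (Fin n) (Fin n) ℝ) (hM : M.IsSymm)
    (x y : Fin n → ℝ) : y ⬝ᵥ (M *ᵥ x) = x ⬝ᵥ (M *ᵥ y) := by
  conv_lhs => rw [Matrix.dotProduct_mulVec, ← hM.eq, Matrix.vecMul_transpose,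
    dotProduct_comm]

lemma dines_quad_expand {n : ℕ} (M : Matrix (Fin n) (Fin n) ℝ) (hM : M.IsSymm)
    (c s : ℝ) (x y : Fin n → ℝ) :
    (c • x + s • y) ⬝ᵥ (M *ᵥ (c • x + s • y)) =
      c^2 * (x ⬝ᵥ (M *ᵥ x)) + 2*c*s*(x ⬝ᵥ (M *ᵥ y)) + s^2 * (y ⬝ᵥ (M *ᵥ y)) := by
  have := dines_bil_symm M hM x y
  simp only [Matrix.mulVec_add, Matrix.mulVec_smul, add_dotProduct,
    dotProduct_add, dotProduct_smul, smul_dotProduct, smul_eq_mul]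
  rw [this]; ring

lemma dines_quad_smul {n : ℕ} (M : Matrix (Fin n) (Fin n) ℝ) (t : ℝ) (x : Fin n → ℝ) :
    (t • x) ⬝ᵥ (M *ᵥ (t • x)) = t^2 * (x ⬝ᵥ (M *ᵥ x)) := by
  simp only [Matrix.mulVec_smul, dotProduct_smul, smul_dotProduct, smul_eq_mul]
  ring

lemma dines_halve (C S : ℝ) (h : C^2 + S^2 = 1) :
    ∃ c s : ℝ, c^2 + s^2 = 1 ∧ c^2 - s^2 = C ∧ 2*c*s = S := by
  by_cases hC : C = -1
  · refine ⟨0, 1, by norm_num, by rw [hC]; ring, by nlinarith⟩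
  · have h1 : 0 < 1 + C := by
      by_contra h0
      push_neg at h0
      have hlt : C < -1 := lt_of_le_of_ne (by linarith) hC
      nlinarith [sq_nonneg S]
    set c := Real.sqrt ((1+C)/2) with hc
    have hcpos : 0 < c := Real.sqrt_pos.2 (by linarith)
    have hc2 : c^2 = (1+C)/2 := Real.sq_sqrt (by linarith)
    refine ⟨c, S/(2*c), ?_, ?_, ?_⟩
    · field_simp
      nlinarith [hc2]
    · field_simp
      nlinarith [hc2]
    · field_simp

lemma dines_rot (d1 d2 : ℝ) : ∃ C S : ℝ, C^2 + S^2 = 1 ∧ C*d1 + S*d2 = 0 := by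
  by_cases hd : d1 = 0 ∧ d2 = 0
  · exact ⟨1, 0, by norm_num, by simp [hd.1, hd.2]⟩
  · have hdd : 0 < d1^2 + d2^2 := by
      rcases not_and_or.mp hd with h | h
      · have := lt_of_le_of_ne (sq_nonneg d1) (Ne.symm (pow_ne_zero 2 h))
        nlinarith [sq_nonneg d2]
      · have := lt_of_le_of_ne (sq_nonneg d2) (Ne.symm (pow_ne_zero 2 h))
        nlinarith [sq_nonneg d1]
    set r := Real.sqrt (d1^2 + d2^2) with hr
    have hrpos : 0 < r := Real.sqrt_pos.2 hdd
    have hr2 : r^2 = d1^2 + d2^2 := Real.sq_sqrt (le_of_lt hdd)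
    refine ⟨-d2/r, d1/r, ?_, ?_⟩
    · field_simp
      linarith [hr2]
    · field_simp
      ring

lemma dines_quadroot (b g : ℝ) (hg : g ≠ 0) : ∃ s : ℝ, g*s^2 + 2*b*s - g = 0 := by
  refine ⟨(Real.sqrt (b^2 + g^2) - b) / g, ?_⟩
  have hr2 : (Real.sqrt (b^2 + g^2))^2 = b^2 + g^2 := Real.sq_sqrt (by positivity)
  field_simp
  linear_combination hr2

/-- If the quadratic forms of the symmetric matrices `A` and `B` have no common
nontrivial zero, then their joint range is either all of `ℝ²` or a closed
convex pointed cone (a closed angular sector of angle less than `π`). -/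
theorem dines_sector {n : ℕ} (A B : Matrix (Fin n) (Fin n) ℝ)
    (hA : A.IsSymm) (hB : B.IsSymm)
    (h : ∀ x : Fin n → ℝ, x ≠ 0 →
      x ⬝ᵥ (A *ᵥ x) ≠ 0 ∨ x ⬝ᵥ (B *ᵥ x) ≠ 0) :
    let R : Set (ℝ × ℝ) := {p | ∃ x : Fin n → ℝ,
      p = (x ⬝ᵥ (A *ᵥ x), x ⬝ᵥ (B *ᵥ x))}
    R = Set.univ ∨
      (IsClosed R ∧ Convex ℝ R ∧
        (∀ p ∈ R, ∀ t : ℝ, 0 ≤ t → t • p ∈ R) ∧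
        R ∩ (-R) ⊆ {(0, 0)}) := by
  intro R
  -- the cone property
  have hcone : ∀ p ∈ R, ∀ t : ℝ, 0 ≤ t → t • p ∈ R := by
    intro p hp t ht
    obtain ⟨x, rfl⟩ := hp
    refine ⟨Real.sqrt t • x, ?_⟩
    have h1 := dines_quad_smul A (Real.sqrt t) x
    have h2 := dines_quad_smul B (Real.sqrt t) x
    rw [Real.sq_sqrt ht] at h1 h2
    rw [h1, h2]
    rfl
  -- collinear midpoint lemma
  have hcol : ∀ a b : ℝ × ℝ, a ∈ R → b ∈ R → a.1 * b.2 - a.2 * b.1 = 0 →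
      ((1:ℝ)/2) • (a + b) ∈ R := by
    intro a b ha hb hdet
    rcases eq_or_ne a 0 with rfl | ha0
    · rw [zero_add]
      exact hcone b hb _ (by norm_num)
    · obtain ⟨lam, hlam⟩ : ∃ lam : ℝ, b = lam • a := by
        have h1 : a.1 ≠ 0 ∨ a.2 ≠ 0 := by
          by_contra hc
          push_neg at hc
          exact ha0 (Prod.ext hc.1 hc.2)
        rcases h1 with h1 | h1
        · refine ⟨b.1 / a.1, Prod.ext (by simp only [Prod.smul_fst, smul_eq_mul]; field_simp) ?_⟩
          show b.2 = (b.1 / a.1) * a.2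
          field_simp
          linear_combination hdet
        · refine ⟨b.2 / a.2, Prod.ext ?_ (by simp only [Prod.smul_snd, smul_eq_mul]; field_simp)⟩
          show b.1 = (b.2 / a.2) * a.1
          field_simp
          linear_combination -hdet
      rcases le_or_gt (-1) lam with hl | hl
      · have he : ((1:ℝ)/2) • (a + b) = ((1+lam)/2) • a := by
          rw [hlam]
          apply Prod.ext <;>
            simp only [Prod.smul_fst, Prod.smul_snd, Prod.fst_add, Prod.snd_add,
              smul_eq_mul] <;> ring
        rw [he]
        exact hcone a ha _ (by linarith)
      · have hlam0 : lam ≠ 0 := ne_of_lt (by linarith)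
        have he : ((1:ℝ)/2) • (a + b) = ((1+lam)/(2*lam)) • b := by
          rw [hlam]
          apply Prod.ext <;>
            simp only [Prod.smul_fst, Prod.smul_snd, Prod.fst_add, Prod.snd_add,
              smul_eq_mul] <;> field_simp <;> ring
        rw [he]
        exact hcone b hb _ (div_nonneg_of_nonpos (by linarith) (by linarith))
  have hadd : ∀ a b : ℝ × ℝ, a ∈ R → b ∈ R → a + b ∈ R := by
    intro a b ha hb
    obtain ⟨x, rfl⟩ := ha
    obtain ⟨y, rfl⟩ := hb
    obtain ⟨C, S, hCS1, hCS2⟩ := dines_rot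
      (((x ⬝ᵥ (B *ᵥ x))*(y ⬝ᵥ (A *ᵥ y)) - (x ⬝ᵥ (A *ᵥ x))*(y ⬝ᵥ (B *ᵥ y)))/2)
      ((((x ⬝ᵥ (A *ᵥ x)) + (y ⬝ᵥ (A *ᵥ y)))*(x ⬝ᵥ (B *ᵥ y))
        - ((x ⬝ᵥ (B *ᵥ x)) + (y ⬝ᵥ (B *ᵥ y)))*(x ⬝ᵥ (A *ᵥ y)))/2)
    obtain ⟨c, s, h1, h2, h3⟩ := dines_halve C S hCS1
    rw [← h2, ← h3] at hCS2
    have hz1 : ((c • x + s • y) ⬝ᵥ (A *ᵥ (c • x + s • y)),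
        (c • x + s • y) ⬝ᵥ (B *ᵥ (c • x + s • y))) ∈ R := ⟨_, rfl⟩
    have hz2 : (((-s) • x + c • y) ⬝ᵥ (A *ᵥ ((-s) • x + c • y)),
        ((-s) • x + c • y) ⬝ᵥ (B *ᵥ ((-s) • x + c • y))) ∈ R := ⟨_, rfl⟩
    have eA1 := dines_quad_expand A hA c s x y
    have eB1 := dines_quad_expand B hB c s x y
    have eA2 := dines_quad_expand A hA (-s) c x y
    have eB2 := dines_quad_expand B hB (-s) c x y
    have hdet := hcol _ _ hz1 hz2 ?_
    swap
    · simp only []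
      rw [eA1, eB1, eA2, eB2]
      linear_combination (-2*(c^2+s^2)) * hCS2
    · have hsum : ((c • x + s • y) ⬝ᵥ (A *ᵥ (c • x + s • y)),
          (c • x + s • y) ⬝ᵥ (B *ᵥ (c • x + s • y)))
          + (((-s) • x + c • y) ⬝ᵥ (A *ᵥ ((-s) • x + c • y)),
          ((-s) • x + c • y) ⬝ᵥ (B *ᵥ ((-s) • x + c • y)))
          = (x ⬝ᵥ (A *ᵥ x), x ⬝ᵥ (B *ᵥ x)) + (y ⬝ᵥ (A *ᵥ y), y ⬝ᵥ (B *ᵥ y)) := by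
        rw [Prod.mk_add_mk, Prod.mk_add_mk, eA1, eB1, eA2, eB2, Prod.mk.injEq]
        refine ⟨?_, ?_⟩
        · linear_combination ((x ⬝ᵥ (A *ᵥ x)) + (y ⬝ᵥ (A *ᵥ y))) * h1
        · linear_combination ((x ⬝ᵥ (B *ᵥ x)) + (y ⬝ᵥ (B *ᵥ y))) * h1
      rw [hsum] at hdet
      have := hcone _ hdet 2 (by norm_num)
      rwa [smul_smul, show (2:ℝ) * (1/2) = 1 by norm_num, one_smul] at this
  have hconv : Convex ℝ R := by
    intro a ha b hb ta tb hta htb htab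
    exact hadd _ _ (hcone a ha ta hta) (hcone b hb tb htb)
  rcases eq_or_ne R Set.univ with hU | hU
  · exact Or.inl hU
  right
  refine ⟨?_, hconv, hcone, ?_⟩
  · -- closedness
    rcases Nat.eq_zero_or_pos n with hn | hn
    · subst hn
      have hR0 : R = {((0:ℝ), (0:ℝ))} := by
        ext q
        constructor
        · rintro ⟨x, rfl⟩
          have hx : x = 0 := Subsingleton.elim x 0
          subst hx
          simp
        · rintro rfl
          exact ⟨0, by simp⟩
      rw [hR0]
      exact isClosed_singleton
    · have hf : Continuous (fun x : Fin n → ℝ =>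
          ((x ⬝ᵥ (A *ᵥ x), x ⬝ᵥ (B *ᵥ x)) : ℝ × ℝ)) := by
        have hq : ∀ M : Matrix (Fin n) (Fin n) ℝ,
            Continuous (fun x : Fin n → ℝ => x ⬝ᵥ (M *ᵥ x)) := by
          intro M
          simp only [dotProduct, Matrix.mulVec]
          exact continuous_finset_sum _ fun i _ => (continuous_apply i).mul
            (continuous_finset_sum _ fun j _ => continuous_const.mul (continuous_apply j))
        exact (hq A).prodMk (hq B)
      haveI : Nonempty (Fin n) := ⟨⟨0, hn⟩⟩
      have hsph : (Metric.sphere (0 : Fin n → ℝ) 1).Nonempty := by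
        obtain ⟨x, hx⟩ := exists_norm_eq (Fin n → ℝ) (zero_le_one)
        exact ⟨x, by simpa [mem_sphere_iff_norm] using hx⟩
      obtain ⟨x₀, hx₀S, hx₀min⟩ := (isCompact_sphere (0 : Fin n → ℝ) 1).exists_isMinOn
        hsph (hf.norm.continuousOn)
      set δ := ‖((x₀ ⬝ᵥ (A *ᵥ x₀), x₀ ⬝ᵥ (B *ᵥ x₀)) : ℝ × ℝ)‖ with hδdef
      have hx₀n : ‖x₀‖ = 1 := by simpa [mem_sphere_iff_norm] using hx₀S
      have hx₀0 : x₀ ≠ 0 := by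
        intro hh
        rw [hh, norm_zero] at hx₀n
        norm_num at hx₀n
      have hδ : 0 < δ := by
        rw [hδdef, norm_pos_iff]
        intro hh
        rcases h x₀ hx₀0 with hq | hq
        · exact hq (congrArg Prod.fst hh)
        · exact hq (congrArg Prod.snd hh)
      have hlow : ∀ x : Fin n → ℝ,
          δ * ‖x‖^2 ≤ ‖((x ⬝ᵥ (A *ᵥ x), x ⬝ᵥ (B *ᵥ x)) : ℝ × ℝ)‖ := by
        intro x
        rcases eq_or_ne x 0 with rfl | hx0
        · simp
        · set u := ‖x‖⁻¹ • x with hu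
          have hxn : ‖x‖ ≠ 0 := norm_ne_zero_iff.mpr hx0
          have hun : ‖u‖ = 1 := by
            rw [hu, norm_smul, norm_inv, norm_norm, inv_mul_cancel₀ hxn]
          have hxu : x = ‖x‖ • u := by
            rw [hu, smul_smul, mul_inv_cancel₀ hxn, one_smul]
          have hcomp : ((x ⬝ᵥ (A *ᵥ x), x ⬝ᵥ (B *ᵥ x)) : ℝ × ℝ)
              = (‖x‖^2 : ℝ) • ((u ⬝ᵥ (A *ᵥ u), u ⬝ᵥ (B *ᵥ u)) : ℝ × ℝ) := by
            apply Prod.ext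
            · simp only [Prod.smul_fst, smul_eq_mul]
              conv_lhs => rw [hxu]
              exact dines_quad_smul A _ _
            · simp only [Prod.smul_snd, smul_eq_mul]
              conv_lhs => rw [hxu]
              exact dines_quad_smul B _ _
          rw [hcomp, norm_smul]
          have h1 : δ ≤ ‖((u ⬝ᵥ (A *ᵥ u), u ⬝ᵥ (B *ᵥ u)) : ℝ × ℝ)‖ :=
            hx₀min (by simpa [mem_sphere_iff_norm] using hun)
          have h2 : ‖(‖x‖^2 : ℝ)‖ = ‖x‖^2 := by
            rw [Real.norm_eq_abs, abs_of_nonneg (by positivity)]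
          rw [h2, mul_comm δ]
          exact mul_le_mul_of_nonneg_left h1 (by positivity)
      apply isClosed_of_closure_subset
      intro p hp
      set r : ℝ := ‖p‖ + 1 with hr
      set ρ : ℝ := Real.sqrt (r / δ) with hρ
      have hK : IsCompact ((fun x : Fin n → ℝ =>
          ((x ⬝ᵥ (A *ᵥ x), x ⬝ᵥ (B *ᵥ x)) : ℝ × ℝ)) '' Metric.closedBall 0 ρ) :=
        (isCompact_closedBall 0 ρ).image hf
      have hsub : R ∩ Metric.closedBall 0 r ⊆ (fun x : Fin n → ℝ =>
          ((x ⬝ᵥ (A *ᵥ x), x ⬝ᵥ (B *ᵥ x)) : ℝ × ℝ)) '' Metric.closedBall 0 ρ := by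
        rintro q ⟨⟨x, rfl⟩, hqb⟩
        refine ⟨x, ?_, rfl⟩
        rw [Metric.mem_closedBall, dist_zero_right] at hqb ⊢
        have h3 : δ * ‖x‖^2 ≤ r := le_trans (hlow x) hqb
        have h4 : ‖x‖^2 ≤ r / δ := by
          rw [le_div_iff₀ hδ]
          linarith [h3]
        rw [hρ]
        exact (Real.le_sqrt (norm_nonneg x) (by positivity)).mpr h4
      have hpc : p ∈ closure (R ∩ Metric.closedBall 0 r) := by
        rw [Metric.mem_closure_iff] at hp ⊢
        intro ε hε
        obtain ⟨q, hqR, hq⟩ := hp (min ε 1) (lt_min hε one_pos)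
        refine ⟨q, ⟨hqR, ?_⟩, lt_of_lt_of_le hq (min_le_left _ _)⟩
        rw [Metric.mem_closedBall, dist_zero_right]
        have : dist p q < 1 := lt_of_lt_of_le hq (min_le_right _ _)
        calc ‖q‖ ≤ ‖p‖ + dist p q := by
              rw [dist_eq_norm]
              have := norm_sub_norm_le p q
              linarith [norm_sub_norm_le q p, (by rw [norm_sub_rev] : ‖q - p‖ = ‖p - q‖)]
          _ ≤ ‖p‖ + 1 := by linarith
      have := (closure_mono hsub) hpc
      rw [hK.isClosed.closure_eq] at this
      obtain ⟨x, -, hx⟩ := this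
      exact ⟨x, hx.symm⟩

  · -- pointedness
    have hpointed : R ∩ (-R) ⊆ {((0:ℝ), (0:ℝ))} := by
      intro p hp
      by_contra hne
      simp only [Set.mem_singleton_iff] at hne
      have hp0 : p ≠ 0 := fun hh => hne (by rw [hh]; rfl)
      have hpR : p ∈ R := hp.1
      have hmR : -p ∈ R := Set.mem_neg.mp hp.2
      have hpcomp : p.1 ≠ 0 ∨ p.2 ≠ 0 := by
        by_contra hc
        push_neg at hc
        exact hp0 (Prod.ext hc.1 hc.2)
      have hpp : 0 < p.1^2 + p.2^2 := by
        rcases hpcomp with h1 | h1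
        · have := lt_of_le_of_ne (sq_nonneg p.1) (Ne.symm (pow_ne_zero 2 h1))
          nlinarith [sq_nonneg p.2]
        · have := lt_of_le_of_ne (sq_nonneg p.2) (Ne.symm (pow_ne_zero 2 h1))
          nlinarith [sq_nonneg p.1]
      have hline : ∀ t : ℝ, t • p ∈ R := by
        intro t
        rcases le_or_gt 0 t with ht | ht
        · exact hcone p hpR t ht
        · have he : t • p = (-t) • (-p) := by rw [smul_neg, neg_smul, neg_neg]
          rw [he]
          exact hcone _ hmR _ (by linarith)
      have hspan : ∀ w : ℝ × ℝ, -p.2 * w.1 + p.1 * w.2 = 0 → ∃ t : ℝ, w = t • p := by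
        intro w hw
        rcases hpcomp with h1 | h1
        · refine ⟨w.1 / p.1, Prod.ext ?_ ?_⟩
          · simp only [Prod.smul_fst, smul_eq_mul]
            field_simp
          · simp only [Prod.smul_snd, smul_eq_mul]
            field_simp
            linarith [hw]
        · refine ⟨w.2 / p.2, Prod.ext ?_ ?_⟩
          · simp only [Prod.smul_fst, smul_eq_mul]
            field_simp
            linarith [hw]
          · simp only [Prod.smul_snd, smul_eq_mul]
            field_simp
      by_cases hex : (∃ x : Fin n → ℝ,
          0 < -p.2 * (x ⬝ᵥ (A *ᵥ x)) + p.1 * (x ⬝ᵥ (B *ᵥ x))) ∧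
          (∃ y : Fin n → ℝ, -p.2 * (y ⬝ᵥ (A *ᵥ y)) + p.1 * (y ⬝ᵥ (B *ᵥ y)) < 0)
      · -- mixed signs : R = univ, contradiction
        apply hU
        obtain ⟨⟨xp, hxp⟩, ⟨xm, hxm⟩⟩ := hex
        have key : ∀ r, r ∈ R → ∀ w : ℝ × ℝ, (-p.2 * r.1 + p.1 * r.2 ≠ 0) →
            0 ≤ (-p.2 * w.1 + p.1 * w.2) / (-p.2 * r.1 + p.1 * r.2) → w ∈ R := by
          intro r hr w hcr hs
          set s := (-p.2 * w.1 + p.1 * w.2) / (-p.2 * r.1 + p.1 * r.2) with hsdef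
          have hmul : s * (-p.2 * r.1 + p.1 * r.2) = -p.2 * w.1 + p.1 * w.2 :=
            div_mul_cancel₀ _ hcr
          have hw' : -p.2 * (w - s • r).1 + p.1 * (w - s • r).2 = 0 := by
            simp only [Prod.fst_sub, Prod.snd_sub, Prod.smul_fst, Prod.smul_snd,
              smul_eq_mul]
            linear_combination -hmul
          obtain ⟨t, ht⟩ := hspan _ hw'
          have hw2 : w = s • r + t • p := by
            rw [← ht]
            abel
          rw [hw2]
          exact hadd _ _ (hcone r hr s hs) (hline t)
        apply Set.eq_univ_of_forall
        intro w
        rcases le_or_gt 0 (-p.2 * w.1 + p.1 * w.2) with hτ | hτ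
        · refine key _ ⟨xp, rfl⟩ w (by simpa using ne_of_gt hxp) ?_
          exact div_nonneg hτ (by simpa using le_of_lt hxp)
        · refine key _ ⟨xm, rfl⟩ w (by simpa using ne_of_lt hxm) ?_
          exact div_nonneg_of_nonpos (le_of_lt hτ) (by simpa using le_of_lt hxm)
      · -- one-signed : positive semidefinite combination
        obtain ⟨c1, c2, hpos, hcp, hccd, hcpos⟩ :
            ∃ c1 c2 : ℝ, (∀ x : Fin n → ℝ,
                0 ≤ c1 * (x ⬝ᵥ (A *ᵥ x)) + c2 * (x ⬝ᵥ (B *ᵥ x))) ∧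
              (c1 * p.1 + c2 * p.2 = 0) ∧ ((-c2) * p.1 + c1 * p.2 ≠ 0) ∧
              (0 < c1^2 + c2^2) := by
          rcases not_and_or.mp hex with hno | hno
          · push_neg at hno
            refine ⟨p.2, -p.1, fun x => by linarith [hno x], by ring, ?_, by nlinarith⟩
            intro hc
            apply absurd hpp
            push_neg
            nlinarith [hc]
          · push_neg at hno
            refine ⟨-p.2, p.1, fun x => by linarith [hno x], by ring, ?_, by nlinarith⟩
            intro hc
            apply absurd hpp
            push_neg
            nlinarith [hc]
        obtain ⟨x₀, hx₀⟩ := hpR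
        obtain ⟨x₁, hx₁⟩ := hmR
        have hp1 : p.1 = x₀ ⬝ᵥ (A *ᵥ x₀) := by rw [hx₀]
        have hp2 : p.2 = x₀ ⬝ᵥ (B *ᵥ x₀) := by rw [hx₀]
        have hm1 : -p.1 = x₁ ⬝ᵥ (A *ᵥ x₁) := by rw [show -p.1 = (-p).1 from rfl, hx₁]
        have hm2 : -p.2 = x₁ ⬝ᵥ (B *ᵥ x₁) := by rw [show -p.2 = (-p).2 from rfl, hx₁]
        have hQ0 : c1 * (x₀ ⬝ᵥ (A *ᵥ x₀)) + c2 * (x₀ ⬝ᵥ (B *ᵥ x₀)) = 0 := by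
          rw [← hp1, ← hp2]; exact hcp
        have hQ1 : c1 * (x₁ ⬝ᵥ (A *ᵥ x₁)) + c2 * (x₁ ⬝ᵥ (B *ᵥ x₁)) = 0 := by
          rw [← hm1, ← hm2]; linear_combination -hcp
        -- bilinear term vanishes
        have g1 := dines_quad_expand A hA 1 1 x₀ x₁
        have g2 := dines_quad_expand B hB 1 1 x₀ x₁
        have g3 := dines_quad_expand A hA 1 (-1) x₀ x₁
        have g4 := dines_quad_expand B hB 1 (-1) x₀ x₁
        have e1 := hpos ((1:ℝ) • x₀ + (1:ℝ) • x₁)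
        have e2 := hpos ((1:ℝ) • x₀ + (-1:ℝ) • x₁)
        rw [g1, g2] at e1
        rw [g3, g4] at e2
        have hbil : c1 * (x₀ ⬝ᵥ (A *ᵥ x₁)) + c2 * (x₀ ⬝ᵥ (B *ᵥ x₁)) = 0 := by
          nlinarith [e1, e2, hQ0, hQ1]
        set γ := (-c2) * p.1 + c1 * p.2 with hγ
        set β := (-c2) * (x₀ ⬝ᵥ (A *ᵥ x₁)) + c1 * (x₀ ⬝ᵥ (B *ᵥ x₁)) with hβ
        have hD0 : (-c2) * (x₀ ⬝ᵥ (A *ᵥ x₀)) + c1 * (x₀ ⬝ᵥ (B *ᵥ x₀)) = γ := by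
          rw [← hp1, ← hp2]
        have hD1 : (-c2) * (x₁ ⬝ᵥ (A *ᵥ x₁)) + c1 * (x₁ ⬝ᵥ (B *ᵥ x₁)) = -γ := by
          rw [← hm1, ← hm2]; ring
        obtain ⟨s, hroot⟩ := dines_quadroot β γ hccd
        have gA := dines_quad_expand A hA s 1 x₀ x₁
        have gB := dines_quad_expand B hB s 1 x₀ x₁
        set z := s • x₀ + (1:ℝ) • x₁ with hz
        have hcz : c1 * (z ⬝ᵥ (A *ᵥ z)) + c2 * (z ⬝ᵥ (B *ᵥ z)) = 0 := by
          rw [gA, gB]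
          linear_combination s^2 * hQ0 + 2*s*hbil + hQ1
        have hdz : (-c2) * (z ⬝ᵥ (A *ᵥ z)) + c1 * (z ⬝ᵥ (B *ᵥ z)) = 0 := by
          rw [gA, gB]
          linear_combination s^2 * hD0 + hD1 + hroot + 2*s*hβ
        have hA0 : z ⬝ᵥ (A *ᵥ z) = 0 := by
          have h9 : (c1^2 + c2^2) * (z ⬝ᵥ (A *ᵥ z)) = 0 := by
            linear_combination c1 * hcz - c2 * hdz
          exact (mul_eq_zero.mp h9).resolve_left (ne_of_gt hcpos)
        have hB0 : z ⬝ᵥ (B *ᵥ z) = 0 := by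
          have h9 : (c1^2 + c2^2) * (z ⬝ᵥ (B *ᵥ z)) = 0 := by
            linear_combination c2 * hcz + c1 * hdz
          exact (mul_eq_zero.mp h9).resolve_left (ne_of_gt hcpos)
        have hznz : z ≠ 0 := by
          intro hz0
          have hx1eq : x₁ = (-s) • x₀ := by
            have h10 : s • x₀ + (1:ℝ) • x₁ = 0 := by rw [← hz, hz0]
            rw [one_smul] at h10
            rw [neg_smul]
            rw [eq_neg_iff_add_eq_zero, add_comm]
            exact h10
          have hq1 := dines_quad_smul A (-s) x₀
          have hq2 := dines_quad_smul B (-s) x₀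
          rw [← hx1eq, ← hm1, ← hp1] at hq1
          rw [← hx1eq, ← hm2, ← hp2] at hq2
          have h1s : (0:ℝ) < 1 + s^2 := by positivity
          have hp10 : p.1 = 0 := by
            have hmm : p.1 * (1 + s^2) = 0 := by linear_combination -hq1
            exact (mul_eq_zero.mp hmm).resolve_right (ne_of_gt h1s)
          have hp20 : p.2 = 0 := by
            have hmm : p.2 * (1 + s^2) = 0 := by linear_combination -hq2
            exact (mul_eq_zero.mp hmm).resolve_right (ne_of_gt h1s)
          exact hp0 (Prod.ext hp10 hp20)
        rcases h z hznz with hq | hq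
        · exact hq hA0
        · exact hq hB0
    exact hpointed
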